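/- Let d ≥ 1, t > 1, x₁ ∈ ℝ^d and ν₀ ∈ P₂(ℝ^d), and take ν₁ = δ_{x₁} (the Dirac mass at x₁). Then the unique minimizer of F_t(ν₀,ν₁;·) over P₂(ℝ^d) is the Dirac mass δ_{x_t}, where x_t = bary(ν₀) + t·(x₁ − bary(ν₀)) and bary(ν₀) = ∫ x dν₀(x). -/
import Mathlib


open MeasureTheory
open scoped ENNReal

noncomputable section

abbrev EucSp (d : ℕ) := EuclideanSpace ℝ (Fin d)

/-- `γ` is a coupling of `μ` and `ν`. -/
def IsCoupling {d : ℕ} (γ : Measure (EucSp d × EucSp d)) (μ ν : Measure (EucSp d)) : Prop :=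
  γ.map Prod.fst = μ ∧ γ.map Prod.snd = ν

/-- Probability measures on `ℝ^d` with finite second moment. -/
def P2 (d : ℕ) : Set (Measure (EucSp d)) :=
  {μ | IsProbabilityMeasure μ ∧ Integrable (fun x => ‖x‖ ^ 2) μ}

/-- Squared Wasserstein distance. -/
noncomputable def W2sq {d : ℕ} (μ ν : Measure (EucSp d)) : ℝ :=
  sInf {r | ∃ γ : Measure (EucSp d × EucSp d), IsProbabilityMeasure γ ∧ IsCoupling γ μ ν ∧
      r = ∫ p, ‖p.1 - p.2‖ ^ 2 ∂γ}

/-- Wasserstein distance. -/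
noncomputable def W2 {d : ℕ} (μ ν : Measure (EucSp d)) : ℝ := Real.sqrt (W2sq μ ν)

/-- Metric extrapolation functional. -/
noncomputable def Ft {d : ℕ} (t : ℝ) (ν₀ ν₁ μ : Measure (EucSp d)) : ℝ :=
  W2sq μ ν₁ / (2 * (t - 1)) - W2sq μ ν₀ / (2 * t)

/-- `μ` minimizes the metric extrapolation functional over `P2 d`. -/
def IsExtrapolation {d : ℕ} (t : ℝ) (ν₀ ν₁ μ : Measure (EucSp d)) : Prop :=
  μ ∈ P2 d ∧ ∀ ρ ∈ P2 d, Ft t ν₀ ν₁ μ ≤ Ft t ν₀ ν₁ ρ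

end

/- ### Auxiliary lemmas -/

noncomputable section Aux

open scoped RealInnerProductSpace

variable {d : ℕ}

lemma aux_int_sq (μ : Measure (EucSp d)) [IsProbabilityMeasure μ]
    (h2 : Integrable (fun x => ‖x‖ ^ 2) μ) (c : EucSp d) :
    Integrable (fun x => ‖x - c‖ ^ 2) μ := by
  have hb : Integrable (fun x : EucSp d => 2 * ‖x‖ ^ 2 + 2 * ‖c‖ ^ 2) μ :=
    (h2.const_mul 2).add (integrable_const _)
  refine hb.mono ?_ (Filter.Eventually.of_forall fun x => ?_)
  · exact ((continuous_id.sub continuous_const).norm.pow 2).aestronglyMeasurable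
  · have h1 : ‖x - c‖ ≤ ‖x‖ + ‖c‖ := norm_sub_le x c
    have h2' : (0:ℝ) ≤ ‖x - c‖ := norm_nonneg _
    rw [Real.norm_eq_abs, Real.norm_eq_abs, abs_of_nonneg (by positivity),
      abs_of_nonneg (by positivity)]
    have h3 : ‖x - c‖ ^ 2 ≤ (‖x‖ + ‖c‖) ^ 2 := by
      exact pow_le_pow_left₀ h2' h1 2
    nlinarith [sq_nonneg (‖x‖ - ‖c‖)]

lemma aux_int_id (μ : Measure (EucSp d)) [IsProbabilityMeasure μ]
    (h2 : Integrable (fun x => ‖x‖ ^ 2) μ) :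
    Integrable (fun x : EucSp d => x) μ := by
  have hb : Integrable (fun x : EucSp d => 1 + ‖x‖ ^ 2) μ := (integrable_const _).add h2
  refine hb.mono aestronglyMeasurable_id (Filter.Eventually.of_forall fun x => ?_)
  rw [Real.norm_eq_abs, abs_of_nonneg (by positivity)]
  rcases le_or_gt ‖x‖ 1 with h | h
  · nlinarith [norm_nonneg x]
  · nlinarith

/-- Parallel axis theorem. -/
lemma aux_par (μ : Measure (EucSp d)) [IsProbabilityMeasure μ]
    (h2 : Integrable (fun x => ‖x‖ ^ 2) μ) (c : EucSp d) :
    ∫ x, ‖x - c‖ ^ 2 ∂μ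
      = (∫ x, ‖x - (∫ y, y ∂μ)‖ ^ 2 ∂μ) + ‖(∫ y, y ∂μ) - c‖ ^ 2 := by
  set m : EucSp d := ∫ y, y ∂μ with hm
  have hid := aux_int_id μ h2
  have hsub : Integrable (fun x : EucSp d => x - m) μ := hid.sub (integrable_const _)
  have hkey : ∀ x : EucSp d, ‖x - c‖ ^ 2
      = ‖x - m‖ ^ 2 + (2 * ⟪m - c, x - m⟫ + ‖m - c‖ ^ 2) := by
    intro x
    have : x - c = (x - m) + (m - c) := by abel
    rw [this, norm_add_sq_real, real_inner_comm]
    ring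
  have hint2 : Integrable (fun x : EucSp d => 2 * ⟪m - c, x - m⟫ + ‖m - c‖ ^ 2) μ := by
    have : Integrable (fun x : EucSp d => ⟪m - c, x - m⟫) μ :=
      ((innerSL ℝ (m - c)).integrable_comp hsub)
    exact (this.const_mul 2).add (integrable_const _)
  calc ∫ x, ‖x - c‖ ^ 2 ∂μ
      = ∫ x, (‖x - m‖ ^ 2 + (2 * ⟪m - c, x - m⟫ + ‖m - c‖ ^ 2)) ∂μ :=
        integral_congr_ae (Filter.Eventually.of_forall fun x => hkey x)
    _ = (∫ x, ‖x - m‖ ^ 2 ∂μ) + ∫ x, (2 * ⟪m - c, x - m⟫ + ‖m - c‖ ^ 2) ∂μ :=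
        integral_add (aux_int_sq μ h2 m) hint2
    _ = (∫ x, ‖x - m‖ ^ 2 ∂μ) + ‖m - c‖ ^ 2 := by
        congr 1
        have h1 : Integrable (fun x : EucSp d => ⟪m - c, x - m⟫) μ :=
          ((innerSL ℝ (m - c)).integrable_comp hsub)
        rw [integral_add (h1.const_mul 2) (integrable_const _), integral_const,
          integral_const_mul, integral_inner hsub]
        have : (∫ x, (x - m) ∂μ) = 0 := by
          rw [integral_sub hid (integrable_const _), integral_const]
          simp [hm]
        rw [this]
        simp

lemma eq_dirac_of_ae (μ : Measure (EucSp d)) [IsProbabilityMeasure μ] (a : EucSp d)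
    (h : ∀ᵐ x ∂μ, x = a) : μ = Measure.dirac a := by
  have h0 : μ ({x | x = a}ᶜ) = 0 := by
    have h' := h
    rw [Filter.Eventually, mem_ae_iff] at h'
    exact h'
  ext s hs
  rw [Measure.dirac_apply' a hs]
  by_cases has : a ∈ s
  · have hc : μ sᶜ = 0 := by
      refine measure_mono_null ?_ h0
      intro x hx
      simp only [Set.mem_compl_iff, Set.mem_setOf_eq] at hx ⊢
      intro hxa; exact hx (hxa ▸ has)
    have := measure_add_measure_compl hs (μ := μ)
    rw [hc, add_zero] at this
    rw [this, measure_univ]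
    simp [has]
  · have : μ s = 0 := by
      refine measure_mono_null ?_ h0
      intro x hx
      simp only [Set.mem_compl_iff, Set.mem_setOf_eq]
      intro hxa; exact has (hxa ▸ hx)
    rw [this]
    simp [has]

lemma coupling_snd_dirac (μ : Measure (EucSp d)) (c : EucSp d)
    (γ : Measure (EucSp d × EucSp d)) (h : IsCoupling γ μ (Measure.dirac c)) :
    ∫ p, ‖p.1 - p.2‖ ^ 2 ∂γ = ∫ x, ‖x - c‖ ^ 2 ∂μ := by
  have hae : ∀ᵐ p ∂γ, p.2 = c := by
    rw [Filter.Eventually, mem_ae_iff]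
    have hms : MeasurableSet ({c}ᶜ : Set (EucSp d)) := (measurableSet_singleton c).compl
    have hmap := Measure.map_apply (μ := γ) measurable_snd hms
    rw [h.2] at hmap
    have hd : Measure.dirac c ({c}ᶜ : Set (EucSp d)) = 0 := by simp
    have hset : ({p : EucSp d × EucSp d | p.2 = c}ᶜ) = Prod.snd ⁻¹' ({c}ᶜ) := by
      ext p; simp
    rw [hset, ← hmap, hd]
  have hcont : Continuous (fun x : EucSp d => ‖x - c‖ ^ 2) :=
    (continuous_id.sub continuous_const).norm.pow 2
  calc ∫ p, ‖p.1 - p.2‖ ^ 2 ∂γ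
      = ∫ p : EucSp d × EucSp d, ‖p.1 - c‖ ^ 2 ∂γ :=
        integral_congr_ae (hae.mono fun p hp => by simp only []; rw [hp])
    _ = ∫ x, ‖x - c‖ ^ 2 ∂(γ.map Prod.fst) :=
        (integral_map measurable_fst.aemeasurable hcont.aestronglyMeasurable).symm
    _ = ∫ x, ‖x - c‖ ^ 2 ∂μ := by rw [h.1]

lemma coupling_fst_dirac (ν : Measure (EucSp d)) (c : EucSp d)
    (γ : Measure (EucSp d × EucSp d)) (h : IsCoupling γ (Measure.dirac c) ν) :
    ∫ p, ‖p.1 - p.2‖ ^ 2 ∂γ = ∫ y, ‖c - y‖ ^ 2 ∂ν := by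
  have hae : ∀ᵐ p ∂γ, p.1 = c := by
    rw [Filter.Eventually, mem_ae_iff]
    have hms : MeasurableSet ({c}ᶜ : Set (EucSp d)) := (measurableSet_singleton c).compl
    have hmap := Measure.map_apply (μ := γ) measurable_fst hms
    rw [h.1] at hmap
    have hd : Measure.dirac c ({c}ᶜ : Set (EucSp d)) = 0 := by simp
    have hset : ({p : EucSp d × EucSp d | p.1 = c}ᶜ) = Prod.fst ⁻¹' ({c}ᶜ) := by
      ext p; simp
    rw [hset, ← hmap, hd]
  have hcont : Continuous (fun y : EucSp d => ‖c - y‖ ^ 2) :=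
    (continuous_const.sub continuous_id).norm.pow 2
  calc ∫ p, ‖p.1 - p.2‖ ^ 2 ∂γ
      = ∫ p : EucSp d × EucSp d, ‖c - p.2‖ ^ 2 ∂γ :=
        integral_congr_ae (hae.mono fun p hp => by simp only []; rw [hp])
    _ = ∫ y, ‖c - y‖ ^ 2 ∂(γ.map Prod.snd) :=
        (integral_map measurable_snd.aemeasurable hcont.aestronglyMeasurable).symm
    _ = ∫ y, ‖c - y‖ ^ 2 ∂ν := by rw [h.2]

lemma isCoupling_prod (μ ν : Measure (EucSp d)) [IsProbabilityMeasure μ]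
    [IsProbabilityMeasure ν] : IsCoupling (μ.prod ν) μ ν := by
  constructor
  · rw [Measure.map_fst_prod]; simp
  · rw [Measure.map_snd_prod]; simp

lemma W2sq_dirac_right (μ : Measure (EucSp d)) [IsProbabilityMeasure μ] (c : EucSp d) :
    W2sq μ (Measure.dirac c) = ∫ x, ‖x - c‖ ^ 2 ∂μ := by
  have hset : {r | ∃ γ : Measure (EucSp d × EucSp d), IsProbabilityMeasure γ ∧
      IsCoupling γ μ (Measure.dirac c) ∧ r = ∫ p, ‖p.1 - p.2‖ ^ 2 ∂γ}
      = {∫ x, ‖x - c‖ ^ 2 ∂μ} := by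
    ext r
    simp only [Set.mem_setOf_eq, Set.mem_singleton_iff]
    constructor
    · rintro ⟨γ, hp, hc, rfl⟩
      exact coupling_snd_dirac μ c γ hc
    · rintro rfl
      exact ⟨μ.prod (Measure.dirac c), inferInstance, isCoupling_prod μ _,
        (coupling_snd_dirac μ c _ (isCoupling_prod μ _)).symm⟩
  rw [W2sq, hset, csInf_singleton]

lemma W2sq_dirac_left (ν : Measure (EucSp d)) [IsProbabilityMeasure ν] (c : EucSp d) :
    W2sq (Measure.dirac c) ν = ∫ y, ‖c - y‖ ^ 2 ∂ν := by
  have hset : {r | ∃ γ : Measure (EucSp d × EucSp d), IsProbabilityMeasure γ ∧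
      IsCoupling γ (Measure.dirac c) ν ∧ r = ∫ p, ‖p.1 - p.2‖ ^ 2 ∂γ}
      = {∫ y, ‖c - y‖ ^ 2 ∂ν} := by
    ext r
    simp only [Set.mem_setOf_eq, Set.mem_singleton_iff]
    constructor
    · rintro ⟨γ, hp, hc, rfl⟩
      exact coupling_fst_dirac ν c γ hc
    · rintro rfl
      exact ⟨(Measure.dirac c).prod ν, inferInstance, isCoupling_prod _ ν,
        (coupling_fst_dirac ν c _ (isCoupling_prod _ ν)).symm⟩
  rw [W2sq, hset, csInf_singleton]

lemma W2sq_le_prod (μ ν : Measure (EucSp d)) [IsProbabilityMeasure μ]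
    [IsProbabilityMeasure ν] :
    W2sq μ ν ≤ ∫ p : EucSp d × EucSp d, ‖p.1 - p.2‖ ^ 2 ∂(μ.prod ν) := by
  apply csInf_le
  · refine ⟨0, ?_⟩
    rintro r ⟨γ, hp, hc, rfl⟩
    exact integral_nonneg fun p => by positivity
  · exact ⟨μ.prod ν, inferInstance, isCoupling_prod μ ν, rfl⟩

/-- Bound on `W2sq` via the independent coupling, in terms of variances and means. -/
lemma W2sq_le_moments (ρ ν : Measure (EucSp d)) [IsProbabilityMeasure ρ]
    [IsProbabilityMeasure ν] (hρ2 : Integrable (fun x => ‖x‖ ^ 2) ρ)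
    (hν2 : Integrable (fun x => ‖x‖ ^ 2) ν) :
    W2sq ρ ν ≤ (∫ x, ‖x - (∫ z, z ∂ρ)‖ ^ 2 ∂ρ) + ((∫ y, ‖y - (∫ z, z ∂ν)‖ ^ 2 ∂ν)
      + ‖(∫ z, z ∂ρ) - (∫ z, z ∂ν)‖ ^ 2) := by
  set m : EucSp d := ∫ z, z ∂ρ with hm
  set b : EucSp d := ∫ z, z ∂ν with hb
  set V₀ : ℝ := ∫ y, ‖y - b‖ ^ 2 ∂ν with hV₀
  refine (W2sq_le_prod ρ ν).trans_eq ?_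
  have hcont : Continuous (fun p : EucSp d × EucSp d => ‖p.1 - p.2‖ ^ 2) :=
    (continuous_fst.sub continuous_snd).norm.pow 2
  have hinner : ∀ x : EucSp d, (∫ y, ‖x - y‖ ^ 2 ∂ν) = V₀ + ‖b - x‖ ^ 2 := by
    intro x
    have h1 : (∫ y, ‖x - y‖ ^ 2 ∂ν) = ∫ y, ‖y - x‖ ^ 2 ∂ν :=
      integral_congr_ae (Filter.Eventually.of_forall fun y => by simp only [norm_sub_rev])
    rw [h1, aux_par ν hν2 x, hV₀, hb]
  have hIntInner : Integrable (fun x : EucSp d => V₀ + ‖b - x‖ ^ 2) ρ := by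
    refine (integrable_const V₀).add ?_
    have := aux_int_sq ρ hρ2 b
    exact this.congr (Filter.Eventually.of_forall fun x => by simp only [norm_sub_rev])
  have hInt : Integrable (fun p : EucSp d × EucSp d => ‖p.1 - p.2‖ ^ 2) (ρ.prod ν) := by
    rw [MeasureTheory.integrable_prod_iff hcont.aestronglyMeasurable]
    constructor
    · refine Filter.Eventually.of_forall fun x => ?_
      exact (aux_int_sq ν hν2 x).congr
        (Filter.Eventually.of_forall fun y => by simp only [norm_sub_rev])
    · refine hIntInner.congr (Filter.Eventually.of_forall fun x => ?_)
      show V₀ + ‖b - x‖ ^ 2 = ∫ y, ‖‖x - y‖ ^ 2‖ ∂ν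
      rw [← hinner x]
      refine integral_congr_ae (Filter.Eventually.of_forall fun y => ?_)
      simp only [Real.norm_eq_abs]
      exact (abs_of_nonneg (by positivity)).symm
  rw [MeasureTheory.integral_prod _ hInt]
  have : (∫ x, (∫ y, ‖x - y‖ ^ 2 ∂ν) ∂ρ) = ∫ x, (V₀ + ‖b - x‖ ^ 2) ∂ρ :=
    integral_congr_ae (Filter.Eventually.of_forall fun x => hinner x)
  rw [this, integral_add (integrable_const V₀)
      ((aux_int_sq ρ hρ2 b).congr (Filter.Eventually.of_forall fun x => by simp only [norm_sub_rev])),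
    integral_const]
  have hswap : (∫ x, ‖b - x‖ ^ 2 ∂ρ) = ∫ x, ‖x - b‖ ^ 2 ∂ρ :=
    integral_congr_ae (Filter.Eventually.of_forall fun x => by simp only [norm_sub_rev])
  rw [hswap, aux_par ρ hρ2 b]
  simp [hm]
  ring

lemma dirac_mem_P2 (a : EucSp d) : Measure.dirac a ∈ P2 d := by
  refine ⟨inferInstance, ?_⟩
  constructor
  · exact (continuous_norm.pow 2).aestronglyMeasurable
  · simp only [HasFiniteIntegral, lintegral_dirac]
    exact ENNReal.coe_lt_top

/-- The key quantitative estimate. -/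
lemma key_estimate {t : ℝ} (ht : 1 < t) (x₁ : EucSp d) (ν₀ : Measure (EucSp d))
    (h₀ : ν₀ ∈ P2 d) (ρ : Measure (EucSp d)) (hρ : ρ ∈ P2 d) :
    Ft t ν₀ (Measure.dirac x₁) (Measure.dirac ((∫ x, x ∂ν₀) + t • (x₁ - ∫ x, x ∂ν₀)))
      + ((∫ x, ‖x - (∫ y, y ∂ρ)‖ ^ 2 ∂ρ)
          + ‖(∫ y, y ∂ρ) - ((∫ x, x ∂ν₀) + t • (x₁ - ∫ x, x ∂ν₀))‖ ^ 2) / (2 * t * (t - 1))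
      ≤ Ft t ν₀ (Measure.dirac x₁) ρ := by
  haveI := h₀.1
  haveI := hρ.1
  have ht0 : (0:ℝ) < t := by linarith
  have ht1 : (0:ℝ) < t - 1 := by linarith
  set b : EucSp d := ∫ x, x ∂ν₀ with hbdef
  set m : EucSp d := ∫ y, y ∂ρ with hmdef
  set xt : EucSp d := b + t • (x₁ - b) with hxt
  set V : ℝ := ∫ x, ‖x - m‖ ^ 2 ∂ρ with hVdef
  set V₀ : ℝ := ∫ y, ‖y - b‖ ^ 2 ∂ν₀ with hV₀def
  set A : ℝ := ‖m - b‖ ^ 2 with hA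
  set B : ℝ := ‖x₁ - b‖ ^ 2 with hB
  set P : ℝ := ⟪m - b, x₁ - b⟫ with hP
  -- W2sq values
  have h1 : W2sq ρ (Measure.dirac x₁) = V + ‖m - x₁‖ ^ 2 := by
    rw [W2sq_dirac_right ρ x₁, aux_par ρ hρ.2 x₁, ← hmdef, ← hVdef]
  have h3 : W2sq (Measure.dirac xt) (Measure.dirac x₁) = ‖xt - x₁‖ ^ 2 := by
    rw [W2sq_dirac_right (Measure.dirac xt) x₁, integral_dirac]
  have h4 : W2sq (Measure.dirac xt) ν₀ = V₀ + ‖b - xt‖ ^ 2 := by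
    rw [W2sq_dirac_left ν₀ xt]
    have : (∫ y, ‖xt - y‖ ^ 2 ∂ν₀) = ∫ y, ‖y - xt‖ ^ 2 ∂ν₀ :=
      integral_congr_ae (Filter.Eventually.of_forall fun y => by simp only [norm_sub_rev])
    rw [this, aux_par ν₀ h₀.2 xt, ← hbdef, ← hV₀def]
  have h2 : W2sq ρ ν₀ ≤ V + (V₀ + A) := by
    have := W2sq_le_moments ρ ν₀ hρ.2 h₀.2
    rw [← hmdef, ← hbdef, ← hVdef, ← hV₀def, ← hA] at this
    linarith
  -- norm computations
  have hn1 : ‖xt - x₁‖ ^ 2 = (t - 1) ^ 2 * B := by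
    have e : xt - x₁ = (t - 1) • (x₁ - b) := by rw [hxt]; try module
    rw [e, norm_smul, Real.norm_eq_abs, mul_pow, sq_abs, hB]
  have hn2 : ‖b - xt‖ ^ 2 = t ^ 2 * B := by
    have e : b - xt = -(t • (x₁ - b)) := by rw [hxt]; try module
    rw [e, norm_neg, norm_smul, Real.norm_eq_abs, mul_pow, sq_abs, hB]
  have hn3 : ‖m - x₁‖ ^ 2 = A - 2 * P + B := by
    have e : m - x₁ = (m - b) - (x₁ - b) := by abel
    rw [e, norm_sub_sq_real, hA, hB, hP]
    try ring
  have hn4 : ‖m - xt‖ ^ 2 = A - 2 * (t * P) + t ^ 2 * B := by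
    have e : m - xt = (m - b) - t • (x₁ - b) := by rw [hxt]; try module
    rw [e, norm_sub_sq_real, real_inner_smul_right, norm_smul, Real.norm_eq_abs, mul_pow,
      sq_abs, hA, hB, hP]
    try ring
  -- put everything together
  rw [Ft, Ft, h1, h3, h4, hn1, hn2, hn3, hn4]
  have hW : W2sq ρ ν₀ / (2 * t) ≤ (V + (V₀ + A)) / (2 * t) :=
    (div_le_div_iff_of_pos_right (by linarith : (0:ℝ) < 2 * t)).mpr h2
  have hid : (V + (A - 2 * P + B)) / (2 * (t - 1)) - (V + (V₀ + A)) / (2 * t)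
      = (t - 1) ^ 2 * B / (2 * (t - 1)) - (V₀ + t ^ 2 * B) / (2 * t)
        + (V + (A - 2 * (t * P) + t ^ 2 * B)) / (2 * t * (t - 1)) := by
    have h1' : t - 1 ≠ 0 := by linarith
    have h2' : t ≠ 0 := by linarith
    field_simp
    ring
  linarith

end Aux

/-- extrapolation when `ν₁` is a Dirac mass: the unique minimizer is
the Dirac mass at `bary(ν₀) + t(x₁ - bary(ν₀))`. -/
theorem stmt_16 {d : ℕ} (hd : 1 ≤ d) {t : ℝ} (ht : 1 < t)
    (x₁ : EucSp d) (ν₀ : Measure (EucSp d)) (h₀ : ν₀ ∈ P2 d) :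
    IsExtrapolation t ν₀ (Measure.dirac x₁)
        (Measure.dirac ((∫ x, x ∂ν₀) + t • (x₁ - ∫ x, x ∂ν₀))) ∧
      ∀ μ : Measure (EucSp d), IsExtrapolation t ν₀ (Measure.dirac x₁) μ →
        μ = Measure.dirac ((∫ x, x ∂ν₀) + t • (x₁ - ∫ x, x ∂ν₀)) := by
  haveI := h₀.1
  set xt : EucSp d := (∫ x, x ∂ν₀) + t • (x₁ - ∫ x, x ∂ν₀) with hxt
  have hden : (0:ℝ) < 2 * t * (t - 1) := by nlinarith
  constructor
  · refine ⟨dirac_mem_P2 _, ?_⟩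
    intro ρ hρ
    have hk := key_estimate ht x₁ ν₀ h₀ ρ hρ
    have hV : (0:ℝ) ≤ ∫ x, ‖x - (∫ y, y ∂ρ)‖ ^ 2 ∂ρ :=
      integral_nonneg fun x => by positivity
    have hnn : (0:ℝ) ≤ ‖(∫ y, y ∂ρ) - xt‖ ^ 2 := by positivity
    have hq : (0:ℝ) ≤ ((∫ x, ‖x - (∫ y, y ∂ρ)‖ ^ 2 ∂ρ)
        + ‖(∫ y, y ∂ρ) - xt‖ ^ 2) / (2 * t * (t - 1)) :=
      div_nonneg (by linarith) hden.le
    linarith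
  · intro μ hμ
    obtain ⟨hμP2, hmin⟩ := hμ
    haveI := hμP2.1
    have h1 := hmin _ (dirac_mem_P2 xt)
    have hk := key_estimate ht x₁ ν₀ h₀ μ hμP2
    set m : EucSp d := ∫ y, y ∂μ with hm
    set V : ℝ := ∫ x, ‖x - m‖ ^ 2 ∂μ with hV
    have hsum : V + ‖m - xt‖ ^ 2 ≤ 0 := by
      have hD : (V + ‖m - xt‖ ^ 2) / (2 * t * (t - 1)) ≤ 0 := by linarith
      rwa [div_le_iff₀ hden, zero_mul] at hD
    have hVnn : (0:ℝ) ≤ V := integral_nonneg fun x => by positivity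
    have hnn : (0:ℝ) ≤ ‖m - xt‖ ^ 2 := by positivity
    have hmxt : m = xt := by
      have h0 : ‖m - xt‖ = 0 := by nlinarith [norm_nonneg (m - xt)]
      exact sub_eq_zero.mp (norm_eq_zero.mp h0)
    have hV0 : V = 0 := by linarith
    have hae : ∀ᵐ x ∂μ, x = m := by
      have hzz' : (fun x : EucSp d => ‖x - m‖ ^ 2) =ᵐ[μ] 0 :=
        (integral_eq_zero_iff_of_nonneg (fun x => by positivity)
          (aux_int_sq μ hμP2.2 m)).mp (by rw [← hV, hV0])
      filter_upwards [hzz'] with x hx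
      simp only [Pi.zero_apply] at hx
      have : ‖x - m‖ = 0 := by nlinarith [norm_nonneg (x - m)]
      exact sub_eq_zero.mp (norm_eq_zero.mp this)
    rw [eq_dirac_of_ae μ m hae, hmxt]
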